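/- Let d ≥ 1, A ⊆ K, ν ≥ 0, and j ∈ ℕ. If the Boolean function f_A is a (ν, j)-junta, then the terminal cut function of G_d satisfies h_K(A) ≤ k·ν·√d + j·k/2, where k = 2^d. -/
import Mathlib


open Finset

set_option maxHeartbeats 1000000

/-- Vertices of the `d`-dimensional Boolean hypercube. -/
abbrev Cube (d : ℕ) := Fin d → Bool

/-- Hamming distance between two Boolean strings. -/
def hamm {d : ℕ} (s t : Cube d) : ℕ := (Finset.univ.filter fun i => s i ≠ t i).card

/-- The vertex set of the graph `G_d`: `Sum.inl s` is the hypercube vertex `y_s`,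
`Sum.inr s` is the terminal `z_s`. -/
abbrev Vtx (d : ℕ) := Cube d ⊕ Cube d

/-- Edge capacities of the graph `G_d`: hypercube edges (Hamming distance `1`) have
capacity `1`, each terminal `z_s` is attached to `y_s` by an edge of capacity `√d`. -/
noncomputable def gCap (d : ℕ) : Vtx d → Vtx d → ℝ
  | Sum.inl s, Sum.inl t => if hamm s t = 1 then 1 else 0
  | Sum.inl s, Sum.inr t => if s = t then Real.sqrt d else 0
  | Sum.inr s, Sum.inl t => if s = t then Real.sqrt d else 0
  | Sum.inr _, Sum.inr _ => 0

/-- The cut function of a capacitated graph: total capacity of edges crossing `A`.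
(Each unordered crossing edge `{u,v}` with `u ∈ A`, `v ∉ A` is counted once.) -/
noncomputable def cutFun {V : Type*} [Fintype V] [DecidableEq V]
    (c : V → V → ℝ) (A : Finset V) : ℝ :=
  ∑ u ∈ A, ∑ v ∈ Aᶜ, c u v

/-- The terminal set `K = {z_s}` of `G_d`. -/
def Kset (d : ℕ) : Finset (Vtx d) := Finset.univ.image Sum.inr

/-- The terminal cut function: `h_K(U) = min { h(A) : A ∩ K = U }`. -/
noncomputable def termCut {V : Type*} [Fintype V] [DecidableEq V]
    (c : V → V → ℝ) (K U : Finset V) : ℝ :=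
  sInf {x : ℝ | ∃ A : Finset V, A ∩ K = U ∧ cutFun c A = x}

/-- The terminal cut function of `G_d`, for a set `A` of terminals (identified with
Boolean strings). -/
noncomputable def hK (d : ℕ) (A : Finset (Cube d)) : ℝ :=
  termCut (gCap d) (Kset d) (A.image Sum.inr)

/-- The character `χ_S(x) = Π_{i ∈ S} x_i`, with the Boolean value `true`
interpreted as `-1` and `false` as `+1`. -/
def chi {d : ℕ} (S : Finset (Fin d)) (x : Cube d) : ℝ := ∏ i ∈ S, (if x i then -1 else 1)

/-- The Fourier coefficient `f̂_S = E_x [f(x) χ_S(x)]`. -/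
noncomputable def fCoeff {d : ℕ} (f : Cube d → ℝ) (S : Finset (Fin d)) : ℝ :=
  (∑ x : Cube d, f x * chi S x) / 2 ^ d

/-- The `±1`-valued indicator function of a set `A` of terminals. -/
def fA {d : ℕ} (A : Finset (Cube d)) : Cube d → ℝ := fun s => if s ∈ A then 1 else -1

lemma hamm_comm {d : ℕ} (s t : Cube d) : hamm s t = hamm t s := by
  unfold hamm
  congr 1
  apply Finset.filter_congr
  intro i _
  simp [ne_comm]

lemma hamm_one {d : ℕ} {s t : Cube d} (h : hamm s t = 1) :
    ∃ i : Fin d, t = Function.update s i (!s i) := by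
  obtain ⟨i0, hi⟩ := Finset.card_eq_one.mp h
  refine ⟨i0, funext fun k => ?_⟩
  have hk : ∀ k : Fin d, (s k ≠ t k) ↔ k = i0 := by
    intro k
    constructor
    · intro hne
      have : k ∈ Finset.univ.filter fun i => s i ≠ t i := by simp [hne]
      rw [hi] at this; simpa using this
    · rintro rfl
      have : k ∈ Finset.univ.filter fun i => s i ≠ t i := by rw [hi]; simp
      simpa using this
  by_cases hki : k = i0
  · subst hki
    have := (hk k).mpr rfl
    simp only [Function.update_self]
    cases hs : s k <;> cases ht : t k <;> simp_all
  · have := (hk k)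
    simp only [hki, iff_false, not_not] at this
    rw [Function.update_of_ne hki]
    exact this.symm

lemma cube_card (d : ℕ) : Fintype.card (Cube d) = 2 ^ d := by
  simp [Fintype.card_fun]

lemma count_bound {d j : ℕ} (g : Cube d → ℝ) (S : Finset (Fin d)) (hS : S.card ≤ j)
    (hdep : ∀ x y : Cube d, (∀ i ∈ S, x i = y i) → g x = g y) :
    2 * (Finset.univ.filter fun q : Cube d × Cube d =>
      g q.1 = 1 ∧ g q.2 ≠ 1 ∧ hamm q.1 q.2 = 1).card ≤ j * 2 ^ d := by
  set P := Finset.univ.filter fun q : Cube d × Cube d =>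
      g q.1 = 1 ∧ g q.2 ≠ 1 ∧ hamm q.1 q.2 = 1 with hP
  set Q := Finset.univ.filter fun q : Cube d × Cube d =>
      g q.1 ≠ g q.2 ∧ hamm q.1 q.2 = 1 with hQdef
  set ψ : Fin d × Cube d → Cube d × Cube d :=
    fun p => (p.2, Function.update p.2 p.1 (!p.2 p.1)) with hψ
  have hQ : Q ⊆ (S ×ˢ Finset.univ).image ψ := by
    intro q hq
    simp only [hQdef, Finset.mem_filter, Finset.mem_univ, true_and] at hq
    obtain ⟨hne, hh⟩ := hq
    obtain ⟨i, ht⟩ := hamm_one hh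
    have hiS : i ∈ S := by
      by_contra hiS
      apply hne
      apply hdep
      intro m hm
      rw [ht, Function.update_of_ne]
      rintro rfl
      exact hiS hm
    refine Finset.mem_image.mpr ⟨(i, q.1), by simp [hiS], ?_⟩
    simp [hψ, ← ht]
  have hdisj : Disjoint P (P.image Prod.swap) := by
    rw [Finset.disjoint_left]
    intro q hq hq'
    obtain ⟨r, hr, hrq⟩ := Finset.mem_image.mp hq'
    simp only [hP, Finset.mem_filter, Finset.mem_univ, true_and] at hq hr
    have : q.1 = r.2 := by rw [← hrq, Prod.fst_swap]
    exact hr.2.1 (this ▸ hq.1)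
  have hsub : P ∪ P.image Prod.swap ⊆ Q := by
    intro q hq
    simp only [hQdef, Finset.mem_filter, Finset.mem_univ, true_and]
    rcases Finset.mem_union.mp hq with h | h
    · simp only [hP, Finset.mem_filter, Finset.mem_univ, true_and] at h
      exact ⟨h.1 ▸ fun e => h.2.1 e.symm, h.2.2⟩
    · obtain ⟨r, hr, hrq⟩ := Finset.mem_image.mp h
      simp only [hP, Finset.mem_filter, Finset.mem_univ, true_and] at hr
      subst hrq
      refine ⟨fun e => hr.2.1 (e.trans hr.1), ?_⟩
      rw [Prod.fst_swap, Prod.snd_swap, hamm_comm]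
      exact hr.2.2
  have h1 : 2 * P.card = (P ∪ P.image Prod.swap).card := by
    rw [Finset.card_union_of_disjoint hdisj,
      Finset.card_image_of_injective _ Prod.swap_injective]
    ring
  calc 2 * P.card = (P ∪ P.image Prod.swap).card := h1
    _ ≤ Q.card := Finset.card_le_card hsub
    _ ≤ ((S ×ˢ Finset.univ).image ψ).card := Finset.card_le_card hQ
    _ ≤ (S ×ˢ (Finset.univ : Finset (Cube d))).card := Finset.card_image_le
    _ = S.card * 2 ^ d := by
        rw [Finset.card_product, Finset.card_univ, cube_card]
    _ ≤ j * 2 ^ d := Nat.mul_le_mul_right _ hS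

/-- If `f_A` is a `(ν, j)`-junta — i.e. there is a Boolean function
`g` depending on at most `j` coordinates with `Pr_x[f_A(x) ≠ g(x)] ≤ ν` — then
`h_K(A) ≤ k ν √d + j k / 2` where `k = 2^d`. -/
theorem junta_implies_small_cut (d : ℕ) (hd : 1 ≤ d) (A : Finset (Cube d))
    (ν : ℝ) (hν : 0 ≤ ν) (j : ℕ)
    (hjunta : ∃ g : Cube d → ℝ, (∀ x, g x = 1 ∨ g x = -1) ∧
      (∃ S : Finset (Fin d), S.card ≤ j ∧
        ∀ x y : Cube d, (∀ i ∈ S, x i = y i) → g x = g y) ∧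
      ((Finset.univ.filter fun x => fA A x ≠ g x).card : ℝ) ≤ ν * 2 ^ d) :
    hK d A ≤ 2 ^ d * ν * Real.sqrt d + j * 2 ^ d / 2 := by
  obtain ⟨g, hg1, ⟨S, hScard, hSdep⟩, hmis⟩ := hjunta
  classical
  set A' : Finset (Vtx d) :=
    ((Finset.univ.filter fun s : Cube d => g s = 1).image Sum.inl) ∪ A.image Sum.inr
    with hA'def
  have hinl : ∀ s : Cube d, (Sum.inl s ∈ A') ↔ g s = 1 := by
    intro s; simp [hA'def]
  have hinr : ∀ s : Cube d, (Sum.inr s ∈ A') ↔ s ∈ A := by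
    intro s; simp [hA'def]
  have hKA : A' ∩ Kset d = A.image Sum.inr := by
    ext v
    cases v with
    | inl s => simp [hA'def, Kset]
    | inr s => simp [hA'def, Kset]
  have hbdd : BddBelow {x : ℝ | ∃ B : Finset (Vtx d),
      B ∩ Kset d = A.image Sum.inr ∧ cutFun (gCap d) B = x} := by
    apply Set.Finite.bddBelow
    apply Set.Finite.subset (Set.finite_range (cutFun (gCap d)))
    rintro x ⟨B, -, hB⟩
    exact ⟨B, hB⟩
  have hstep : hK d A ≤ cutFun (gCap d) A' := csInf_le hbdd ⟨A', hKA, rfl⟩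
  refine hstep.trans ?_
  have hrw : (∑ u : Vtx d, ∑ v : Vtx d, (if u ∈ A' ∧ v ∉ A' then gCap d u v else 0))
      = cutFun (gCap d) A' := by
    rw [cutFun]
    have h1 : ∀ u : Vtx d, (∑ v : Vtx d, (if u ∈ A' ∧ v ∉ A' then gCap d u v else 0))
        = if u ∈ A' then ∑ v ∈ A'ᶜ, gCap d u v else 0 := by
      intro u
      by_cases hu : u ∈ A'
      · simp only [hu, true_and, if_true]
        rw [show (∑ v : Vtx d, (if v ∉ A' then gCap d u v else 0))
            = ∑ v : Vtx d, (if v ∈ A'ᶜ then gCap d u v else 0) from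
          Finset.sum_congr rfl fun v _ => by simp [Finset.mem_compl]]
        rw [Finset.sum_ite_mem, Finset.univ_inter]
      · simp [hu]
    rw [Finset.sum_congr rfl fun u _ => h1 u, Finset.sum_ite_mem, Finset.univ_inter]
  rw [← hrw]
  rw [Fintype.sum_sum_type]
  simp only [Fintype.sum_sum_type]
  rw [Finset.sum_add_distrib, Finset.sum_add_distrib]
  -- name the four pieces
  have hT22 : (∑ s : Cube d, ∑ t : Cube d,
      (if Sum.inr s ∈ A' ∧ Sum.inr t ∉ A' then gCap d (Sum.inr s) (Sum.inr t) else 0)) = 0 := by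
    simp [gCap]
  have hT11 : (∑ s : Cube d, ∑ t : Cube d,
      (if Sum.inl s ∈ A' ∧ Sum.inl t ∉ A' then gCap d (Sum.inl s) (Sum.inl t) else 0))
      ≤ (j : ℝ) * 2 ^ d / 2 := by
    have e : (∑ s : Cube d, ∑ t : Cube d,
        (if Sum.inl s ∈ A' ∧ Sum.inl t ∉ A' then gCap d (Sum.inl s) (Sum.inl t) else 0))
        = ((Finset.univ.filter fun q : Cube d × Cube d =>
            g q.1 = 1 ∧ g q.2 ≠ 1 ∧ hamm q.1 q.2 = 1).card : ℝ) := by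
      rw [← Finset.sum_product', Finset.univ_product_univ, ← Finset.sum_boole]
      apply Finset.sum_congr rfl
      intro q _
      by_cases h1 : g q.1 = 1 <;> by_cases h2 : g q.2 = 1 <;>
        by_cases h3 : hamm q.1 q.2 = 1 <;>
        simp [hinl, gCap, h1, h2, h3]
    rw [e]
    have h2 := count_bound g S hScard hSdep
    have h3 := (Nat.cast_le (α := ℝ)).mpr h2
    push_cast at h3
    linarith
  have e12 : (∑ s : Cube d, ∑ t : Cube d,
      (if Sum.inl s ∈ A' ∧ Sum.inr t ∉ A' then gCap d (Sum.inl s) (Sum.inr t) else 0))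
      = ∑ s : Cube d, (if g s = 1 ∧ s ∉ A then Real.sqrt d else 0) := by
    apply Finset.sum_congr rfl
    intro s _
    rw [show (∑ t : Cube d,
        (if Sum.inl s ∈ A' ∧ Sum.inr t ∉ A' then gCap d (Sum.inl s) (Sum.inr t) else 0))
        = ∑ t : Cube d, (if s = t then (if g s = 1 ∧ t ∉ A then Real.sqrt d else 0) else 0) from
      Finset.sum_congr rfl fun t _ => by
        simp only [hinl, hinr, gCap]
        split_ifs <;> simp_all]
    rw [Finset.sum_ite_eq]
    simp
  have e21 : (∑ s : Cube d, ∑ t : Cube d,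
      (if Sum.inr s ∈ A' ∧ Sum.inl t ∉ A' then gCap d (Sum.inr s) (Sum.inl t) else 0))
      = ∑ s : Cube d, (if s ∈ A ∧ ¬ g s = 1 then Real.sqrt d else 0) := by
    apply Finset.sum_congr rfl
    intro s _
    rw [show (∑ t : Cube d,
        (if Sum.inr s ∈ A' ∧ Sum.inl t ∉ A' then gCap d (Sum.inr s) (Sum.inl t) else 0))
        = ∑ t : Cube d, (if s = t then (if s ∈ A ∧ ¬ g t = 1 then Real.sqrt d else 0) else 0) from
      Finset.sum_congr rfl fun t _ => by
        simp only [hinl, hinr, gCap]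
        split_ifs <;> simp_all]
    rw [Finset.sum_ite_eq]
    simp
  have hT1221 : (∑ s : Cube d, (if g s = 1 ∧ s ∉ A then Real.sqrt d else 0))
      + (∑ s : Cube d, (if s ∈ A ∧ ¬ g s = 1 then Real.sqrt d else 0))
      ≤ 2 ^ d * ν * Real.sqrt d := by
    rw [← Finset.sum_add_distrib]
    have hb : ∀ s : Cube d, (if g s = 1 ∧ s ∉ A then Real.sqrt d else 0)
        + (if s ∈ A ∧ ¬ g s = 1 then Real.sqrt d else 0)
        ≤ (if fA A s ≠ g s then Real.sqrt d else 0) := by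
      intro s
      by_cases hsA : s ∈ A <;> rcases hg1 s with h1 | h1 <;>
        norm_num [fA, hsA, h1, Real.sqrt_nonneg]
    refine (Finset.sum_le_sum fun s _ => hb s).trans ?_
    rw [Finset.sum_ite, Finset.sum_const, Finset.sum_const_zero, add_zero, nsmul_eq_mul]
    calc ((Finset.univ.filter fun s : Cube d => fA A s ≠ g s).card : ℝ) * Real.sqrt d
        ≤ (ν * 2 ^ d) * Real.sqrt d := by
          apply mul_le_mul_of_nonneg_right _ (Real.sqrt_nonneg _)
          exact hmis
      _ = 2 ^ d * ν * Real.sqrt d := by ring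
  rw [e12, e21, hT22, add_zero]
  linarith [hT11, hT1221]
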